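/- For any three qubit density matrices ρ₁, ρ₂, ρ₃ there exists a 2×2 unitary matrix U such that the three matrices (1/2)·ρᵢ + (1/2)·U ρᵢ U† for i = 1, 2, 3 are all equal. (One bit of key suffices to encrypt three qubit states into the most mixed state of their affine span: the channel ρ ↦ (1/2)ρ + (1/2)UρU† with U the rotation by 180 degrees about the axis of the circle spanned by the three states sends all three plaintexts to the same ciphertext state.) -/

import Mathlib

open Matrix ComplexOrder Complex Submodule Module

lemma exOrth (v w : EuclideanSpace ℝ (Fin 3)) :
    ∃ n : EuclideanSpace ℝ (Fin 3), ‖n‖ = 1 ∧ inner ℝ n v = (0:ℝ) ∧ inner ℝ n w = (0:ℝ) := by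
  set K := Submodule.span ℝ ({v, w} : Set (EuclideanSpace ℝ (Fin 3))) with hKdef
  have hK : finrank ℝ K ≤ 2 := by
    classical
    have h := finrank_span_finset_le_card (R := ℝ) ({v, w} : Finset (EuclideanSpace ℝ (Fin 3)))
    simp only [Finset.coe_insert, Finset.coe_singleton] at h
    exact h.trans ((Finset.card_insert_le _ _).trans (by simp))
  have hne : Kᗮ ≠ ⊥ := by
    intro h
    have hT : K = ⊤ := Submodule.orthogonal_eq_bot_iff.mp h
    rw [hT] at hK
    rw [finrank_top] at hK
    simp [finrank_euclideanSpace] at hK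
  obtain ⟨x, hxK, hx0⟩ := (Submodule.ne_bot_iff _).mp hne
  refine ⟨‖x‖⁻¹ • x, ?_, ?_, ?_⟩
  · rw [norm_smul]
    simp [norm_ne_zero_iff.mpr hx0, inv_mul_cancel₀ (norm_ne_zero_iff.mpr hx0)]
  · rw [real_inner_smul_left]
    have := hxK v (Submodule.subset_span (by simp))
    rw [real_inner_comm] at this
    rw [this]; ring
  · rw [real_inner_smul_left]
    have := hxK w (Submodule.subset_span (by simp))
    rw [real_inner_comm] at this
    rw [this]; ring

lemma keyMat (n1 n2 n3 a b t : ℝ) (hn : n1^2 + n2^2 + n3^2 = 1)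
    (hd : n1*a + n2*b + n3*t = 0) :
    (!![(n3:ℂ), n1 - n2*I; n1 + n2*I, -n3]) * (!![(t:ℂ), a - b*I; a + b*I, -t]) *
      (!![(n3:ℂ), n1 - n2*I; n1 + n2*I, -n3]) = -(!![(t:ℂ), a - b*I; a + b*I, -t]) := by
  have hnC : (n1:ℂ)^2 + n2^2 + n3^2 = 1 := by exact_mod_cast congrArg Complex.ofReal hn
  have hdC : (n1:ℂ)*a + n2*b + n3*t = 0 := by exact_mod_cast congrArg Complex.ofReal hd
  ext i j
  fin_cases i <;> fin_cases j <;>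
    simp [Matrix.mul_apply, Fin.sum_univ_two]
  · linear_combination (2*(n3:ℂ)) * hdC - (t:ℂ) * hnC + ((t:ℂ)*n2^2 - 2*n3*n2*b) * Complex.I_sq
  · linear_combination (2*((n1:ℂ) - n2*I)) * hdC - ((a:ℂ) - b*I) * hnC + (-2*(n1:ℂ)*n2*b + n2^2*a + n2^2*b*I) * Complex.I_sq
  · linear_combination (2*((n1:ℂ) + n2*I)) * hdC - ((a:ℂ) + b*I) * hnC + (-2*(n1:ℂ)*n2*b + n2^2*a - n2^2*b*I) * Complex.I_sq
  · linear_combination (-2*(n3:ℂ)) * hdC + (t:ℂ) * hnC + (2*(n2:ℂ)*n3*b - n2^2*t) * Complex.I_sq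

lemma repMat (D : Matrix (Fin 2) (Fin 2) ℂ) (hD : D.IsHermitian) (htr : D.trace = 0) :
    D = !![(((D 0 0).re : ℝ) : ℂ), ((D 0 1).re : ℝ) - (-(D 0 1).im : ℝ)*I;
           ((D 0 1).re : ℝ) + (-(D 0 1).im : ℝ)*I, -(((D 0 0).re : ℝ) : ℂ)] := by
  have h00 : star (D 0 0) = D 0 0 := by
    conv_rhs => rw [← hD]
    simp [Matrix.conjTranspose_apply]
  have h10 : D 1 0 = star (D 0 1) := by
    conv_lhs => rw [← hD]
    simp [Matrix.conjTranspose_apply]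
  have h00im : (D 0 0).im = 0 := by
    have := congrArg Complex.im h00
    simp [Complex.conj_im] at this
    linarith
  have htr' : D 0 0 + D 1 1 = 0 := by
    rw [← htr]; simp [Matrix.trace, Fin.sum_univ_two]
  ext i j
  have hD11 : D 1 1 = -(D 0 0) := by linear_combination htr'
  fin_cases i <;> fin_cases j <;> simp [Complex.ext_iff]
  · exact h00im
  · simp [h10]
  · simp [hD11, h00im]

lemma unitMat (n1 n2 n3 : ℝ) (hn : n1^2 + n2^2 + n3^2 = 1) :
    (!![(n3:ℂ), n1 - n2*I; n1 + n2*I, -n3]) * (!![(n3:ℂ), n1 - n2*I; n1 + n2*I, -n3]) = 1 := by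
  have hnC : (n1:ℂ)^2 + n2^2 + n3^2 = 1 := by exact_mod_cast congrArg Complex.ofReal hn
  ext i j
  fin_cases i <;> fin_cases j <;>
    simp [Matrix.mul_apply, Fin.sum_univ_two, Matrix.one_apply]
  · linear_combination hnC - ((n2:ℂ)^2) * Complex.I_sq
  · ring
  · ring
  · linear_combination hnC - ((n2:ℂ)^2) * Complex.I_sq

lemma hermMat (n1 n2 n3 : ℝ) :
    (!![(n3:ℂ), n1 - n2*I; n1 + n2*I, -n3])ᴴ = !![(n3:ℂ), n1 - n2*I; n1 + n2*I, -n3] := by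
  ext i j
  fin_cases i <;> fin_cases j <;>
    simp [Matrix.conjTranspose_apply, Complex.ext_iff]

theorem stmt_8 (ρ1 ρ2 ρ3 : Matrix (Fin 2) (Fin 2) ℂ)
    (h1 : ρ1.PosSemidef) (t1 : ρ1.trace = 1)
    (h2 : ρ2.PosSemidef) (t2 : ρ2.trace = 1)
    (h3 : ρ3.PosSemidef) (t3 : ρ3.trace = 1) :
    ∃ U : Matrix (Fin 2) (Fin 2) ℂ, U ∈ Matrix.unitaryGroup (Fin 2) ℂ ∧
      (1/2 : ℂ) • ρ1 + (1/2 : ℂ) • (U * ρ1 * Uᴴ) =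
      (1/2 : ℂ) • ρ2 + (1/2 : ℂ) • (U * ρ2 * Uᴴ) ∧
      (1/2 : ℂ) • ρ2 + (1/2 : ℂ) • (U * ρ2 * Uᴴ) =
      (1/2 : ℂ) • ρ3 + (1/2 : ℂ) • (U * ρ3 * Uᴴ) := by
  set D := ρ1 - ρ2 with hDdef
  set E := ρ2 - ρ3 with hEdef
  have hD : D.IsHermitian := h1.1.sub h2.1
  have hE : E.IsHermitian := h2.1.sub h3.1
  have htrD : D.trace = 0 := by simp [hDdef, t1, t2]
  have htrE : E.trace = 0 := by simp [hEdef, t2, t3]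
  obtain ⟨n, hnorm, hiv, hiw⟩ := exOrth
    ((WithLp.equiv 2 (Fin 3 → ℝ)).symm ![(D 0 1).re, -(D 0 1).im, (D 0 0).re])
    ((WithLp.equiv 2 (Fin 3 → ℝ)).symm ![(E 0 1).re, -(E 0 1).im, (E 0 0).re])
  have hn : (n 0)^2 + (n 1)^2 + (n 2)^2 = 1 := by
    have := real_inner_self_eq_norm_sq n
    rw [hnorm] at this
    simp only [PiLp.inner_apply, RCLike.inner_apply, conj_trivial, Fin.sum_univ_three] at this
    nlinarith [this]
  have hdD : n 0 * (D 0 1).re + n 1 * (-(D 0 1).im) + n 2 * (D 0 0).re = 0 := by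
    simpa [PiLp.inner_apply, Fin.sum_univ_three, mul_comm] using hiv
  have hdE : n 0 * (E 0 1).re + n 1 * (-(E 0 1).im) + n 2 * (E 0 0).re = 0 := by
    simpa [PiLp.inner_apply, Fin.sum_univ_three, mul_comm] using hiw
  set U : Matrix (Fin 2) (Fin 2) ℂ := !![((n 2 : ℝ):ℂ), (n 0 : ℝ) - (n 1 : ℝ)*I;
      (n 0 : ℝ) + (n 1 : ℝ)*I, -((n 2 : ℝ):ℂ)] with hUdef
  have hUH : Uᴴ = U := hermMat _ _ _
  have hUU : U * U = 1 := unitMat _ _ _ hn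
  have hmem : U ∈ Matrix.unitaryGroup (Fin 2) ℂ := by
    rw [Matrix.mem_unitaryGroup_iff]
    show U * Uᴴ = 1
    rw [hUH]; exact hUU
  have hkD : U * D * U = -D := by
    conv_lhs => rw [repMat D hD htrD]
    conv_rhs => rw [repMat D hD htrD]
    exact keyMat _ _ _ _ _ _ hn hdD
  have hkE : U * E * U = -E := by
    conv_lhs => rw [repMat E hE htrE]
    conv_rhs => rw [repMat E hE htrE]
    exact keyMat _ _ _ _ _ _ hn hdE
  refine ⟨U, hmem, ?_, ?_⟩
  · rw [hUH]
    have h : U * ρ1 * U - U * ρ2 * U = -(ρ1 - ρ2) := by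
      rw [← hkD, hDdef]; noncomm_ring
    have h2' : U * ρ1 * U = U * ρ2 * U - ρ1 + ρ2 := by
      rw [eq_sub_iff_add_eq] at *
      linear_combination (norm := noncomm_ring) h
    rw [h2']
    module
  · rw [hUH]
    have h : U * ρ2 * U - U * ρ3 * U = -(ρ2 - ρ3) := by
      rw [← hkE, hEdef]; noncomm_ring
    have h2' : U * ρ2 * U = U * ρ3 * U - ρ2 + ρ3 := by
      linear_combination (norm := noncomm_ring) h
    rw [h2']
    module
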